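/- Let ω ∈ L¹ ∩ L²(ℝ²₊) be nonnegative with x₂ω ∈ L¹(ℝ²₊). Then for every x ∈ ℝ²₊, the stream function ψ(x) = ∫ G(x,y) ω(y) dy satisfies ψ(x) ≤ C x₂^{1/2} ‖ω‖₁^{1/2} ‖ω‖₂^{1/2} for an absolute constant C independent of ω and x. -/

import Mathlib

open Real MeasureTheory

def upperHalf : Set (ℝ × ℝ) := {p | 0 < p.2}

noncomputable def sqdist (x y : ℝ × ℝ) : ℝ := (x.1 - y.1) ^ 2 + (x.2 - y.2) ^ 2

noncomputable def halfPlaneGreen (x y : ℝ × ℝ) : ℝ :=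
  (1 / (4 * π)) * Real.log (1 + 4 * x.2 * y.2 / sqdist x y)

lemma measurableSet_upperHalf : MeasurableSet upperHalf :=
  measurableSet_lt measurable_const measurable_snd

lemma measurable_green (x : ℝ × ℝ) : Measurable (fun y => halfPlaneGreen x y) := by
  unfold halfPlaneGreen sqdist
  exact (Real.measurable_log.comp ((measurable_const.add
    (((measurable_const.mul measurable_snd)).div
      (((measurable_const.sub measurable_fst).pow measurable_const).add
        ((measurable_const.sub measurable_snd).pow measurable_const)))))).const_mul _

lemma green_nonneg {x y : ℝ × ℝ} (hx : 0 < x.2) (hy : 0 ≤ y.2) : 0 ≤ halfPlaneGreen x y := by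
  unfold halfPlaneGreen
  have hd : 0 ≤ sqdist x y := by unfold sqdist; positivity
  have h1 : 0 ≤ 4 * x.2 * y.2 / sqdist x y := div_nonneg (by positivity) hd
  have h2 : 0 ≤ Real.log (1 + 4 * x.2 * y.2 / sqdist x y) := Real.log_nonneg (by linarith)
  have hπ := Real.pi_pos
  positivity

lemma aux_exp {u : ℝ} (hu : 0 < u) :
    (1 + (rexp (2 * u) - 1)) / (rexp (2 * u) - 1) ^ 2 ≤ 4 * rexp (-u) / u ^ 2 := by
  set E := rexp u with hE
  have hE0 : 0 < E := Real.exp_pos u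
  have h2u : rexp (2 * u) = E ^ 2 := by rw [two_mul, Real.exp_add]; ring
  have hF0 : 0 < rexp (u / 2) := Real.exp_pos _
  have hFE : rexp (u / 2) ^ 2 = E := by
    rw [sq, ← Real.exp_add, hE]; norm_num
  have h1 : 1 + u ≤ 2 * rexp (u / 2) := by
    have := Real.add_one_le_exp (u / 2); linarith
  have hEc : 2 * u + 1 ≤ E ^ 2 := by
    have := Real.add_one_le_exp (2 * u); rw [h2u] at this; linarith
  have hc0 : 0 < E ^ 2 - 1 := by nlinarith
  have h2 : u * E ^ 2 ≤ (1 + u) * (E ^ 2 - 1) := by nlinarith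
  have hne : rexp (-u) = 1 / E := by rw [Real.exp_neg, hE]; exact inv_eq_one_div E
  rw [h2u, hne]
  rw [div_le_div_iff₀ (by positivity) (by positivity)]
  have k1 : u * E ^ 2 ≤ 2 * rexp (u / 2) * (E ^ 2 - 1) := by nlinarith
  have k2 : (u * E ^ 2) ^ 2 ≤ (2 * rexp (u / 2) * (E ^ 2 - 1)) ^ 2 := by
    apply pow_le_pow_left₀ (by positivity) k1
  have k3 : u ^ 2 * E ^ 4 ≤ 4 * E * (E ^ 2 - 1) ^ 2 := by nlinarith [hFE]
  -- goal : (1 + (E^2 - 1)) * u^2 ≤ 4 * (1/E) * (E^2-1)^2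
  rw [show (1 : ℝ) + (E ^ 2 - 1) = E ^ 2 by ring]
  rw [show (4 : ℝ) * (1 / E) * (E ^ 2 - 1) ^ 2 = 4 * (E ^ 2 - 1) ^ 2 / E by ring,
    le_div_iff₀ hE0]
  nlinarith [k3]

set_option maxHeartbeats 1000000 in
lemma level_volume (x : ℝ × ℝ) (hx : 0 < x.2) (σ : ℝ) (hσ : 0 < σ) :
    volume ({y : ℝ × ℝ | σ < halfPlaneGreen x y} ∩ upperHalf) ≤
      ENNReal.ofReal (16 * x.2 ^ 2 * (1 + (rexp (4 * π * σ) - 1)) / (rexp (4 * π * σ) - 1) ^ 2) := by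
  have hπ := Real.pi_pos
  set c := rexp (4 * π * σ) - 1 with hc
  have hc0 : 0 < c := by
    have : (1 : ℝ) < rexp (4 * π * σ) := Real.one_lt_exp_iff.mpr (by positivity)
    linarith
  have h1c : (0 : ℝ) < 1 + c := by linarith
  set R := 2 * x.2 * Real.sqrt (1 + c) / c with hR
  have hsq : (0:ℝ) < Real.sqrt (1 + c) := Real.sqrt_pos.mpr h1c
  have hR0 : 0 < R := by rw [hR]; positivity
  have hRsq : R ^ 2 = 4 * x.2 ^ 2 * (1 + c) / c ^ 2 := by
    rw [hR, div_pow, mul_pow, mul_pow, Real.sq_sqrt h1c.le]; ring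
  set b := x.2 + 2 * x.2 / c with hb
  have hsub : {y : ℝ × ℝ | σ < halfPlaneGreen x y} ∩ upperHalf ⊆
      (Set.Ioo (x.1 - R) (x.1 + R)) ×ˢ (Set.Ioo (b - R) (b + R)) := by
    rintro ⟨y1, y2⟩ ⟨hy, hy2⟩
    simp only [Set.mem_setOf_eq] at hy
    have hy2' : (0:ℝ) < y2 := hy2
    set d := sqdist x (y1, y2) with hd
    have hd0 : 0 ≤ d := by rw [hd]; unfold sqdist; positivity
    set r := 4 * x.2 * y2 / d with hr
    have hr0 : 0 ≤ r := by rw [hr]; positivity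
    have hgr : halfPlaneGreen x (y1, y2) = (1 / (4 * π)) * Real.log (1 + r) := rfl
    have hlog : 4 * π * σ < Real.log (1 + r) := by
      rw [hgr] at hy
      have h4 : Real.log (1 + r) = (4 * π) * ((1 / (4 * π)) * Real.log (1 + r)) := by
        field_simp
      have := mul_lt_mul_of_pos_left hy (show (0:ℝ) < 4 * π by positivity)
      linarith [this, h4.le, h4.ge]
    have hexp : rexp (4 * π * σ) < 1 + r := by
      have h1r : (0:ℝ) < 1 + r := by linarith
      calc rexp (4 * π * σ) < rexp (Real.log (1 + r)) := Real.exp_lt_exp.mpr hlog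
        _ = 1 + r := Real.exp_log h1r
    have hcr : c < r := by rw [hc]; linarith
    have hdpos : 0 < d := by
      rcases hd0.lt_or_eq with h | h
      · exact h
      · exfalso; rw [hr, ← h, div_zero] at hcr; linarith
    have hkey : c * d < 4 * x.2 * y2 := by
      rw [hr] at hcr
      exact (lt_div_iff₀ hdpos).mp hcr
    have hdd : d = (x.1 - y1) ^ 2 + (x.2 - y2) ^ 2 := rfl
    have hlt : (y1 - x.1) ^ 2 + (y2 - b) ^ 2 < R ^ 2 := by
      have expand : (y1 - x.1) ^ 2 + (y2 - b) ^ 2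
          = d - 4 * x.2 * y2 / c + 4 * x.2 ^ 2 / c + 4 * x.2 ^ 2 / c ^ 2 := by
        rw [hdd, hb]; field_simp; ring
      have hdlt : d < 4 * x.2 * y2 / c := (lt_div_iff₀' hc0).mpr hkey
      rw [expand, hRsq]
      have : 4 * x.2 ^ 2 * (1 + c) / c ^ 2 = 4 * x.2 ^ 2 / c ^ 2 + 4 * x.2 ^ 2 / c := by
        field_simp
      rw [this]; linarith
    have habs1 : |y1 - x.1| < R := by
      nlinarith [sq_abs (y1 - x.1), abs_nonneg (y1 - x.1), sq_nonneg (y2 - b)]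
    have habs2 : |y2 - b| < R := by
      nlinarith [sq_abs (y2 - b), abs_nonneg (y2 - b), sq_nonneg (y1 - x.1)]
    obtain ⟨ha1, ha2⟩ := abs_lt.mp habs1
    obtain ⟨hb1, hb2⟩ := abs_lt.mp habs2
    exact ⟨⟨by linarith, by linarith⟩, ⟨by linarith, by linarith⟩⟩
  calc volume ({y : ℝ × ℝ | σ < halfPlaneGreen x y} ∩ upperHalf)
      ≤ volume ((Set.Ioo (x.1 - R) (x.1 + R)) ×ˢ (Set.Ioo (b - R) (b + R))) :=
        measure_mono hsub
    _ = ENNReal.ofReal (x.1 + R - (x.1 - R)) * ENNReal.ofReal (b + R - (b - R)) := by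
        rw [MeasureTheory.Measure.volume_eq_prod, MeasureTheory.Measure.prod_prod,
          Real.volume_Ioo, Real.volume_Ioo]
    _ ≤ ENNReal.ofReal (16 * x.2 ^ 2 * (1 + c) / c ^ 2) := by
        rw [← ENNReal.ofReal_mul (by linarith)]
        apply ENNReal.ofReal_le_ofReal
        have : (x.1 + R - (x.1 - R)) * (b + R - (b - R)) = 4 * R ^ 2 := by ring
        rw [this, hRsq]
        rw [show (4:ℝ) * (4 * x.2 ^ 2 * (1 + c) / c ^ 2) = 16 * x.2 ^ 2 * (1 + c) / c ^ 2 by ring]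

lemma integrable_exp_sqrt :
    IntegrableOn (fun t : ℝ => rexp (-(2 * π * Real.sqrt t))) (Set.Ioi (0:ℝ)) := by
  have hπ := Real.pi_pos
  have hcont : Continuous fun t : ℝ => rexp (-(2 * π * Real.sqrt t)) := by
    continuity
  have h1 : IntegrableOn (fun t : ℝ => rexp (-(2 * π * Real.sqrt t))) (Set.Ioc (0:ℝ) 1) :=
    (hcont.continuousOn.integrableOn_Icc).mono_set Set.Ioc_subset_Icc_self
  have hg : IntegrableOn (fun t : ℝ => (16 / π ^ 4) * t ^ (-2 : ℝ)) (Set.Ioi (1:ℝ)) :=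
    (integrableOn_Ioi_rpow_of_lt (by norm_num) one_pos).const_mul _
  have h2 : IntegrableOn (fun t : ℝ => rexp (-(2 * π * Real.sqrt t))) (Set.Ioi (1:ℝ)) := by
    apply Integrable.mono' hg hcont.aestronglyMeasurable.restrict
    filter_upwards [ae_restrict_mem measurableSet_Ioi] with t ht
    have ht1 : (1:ℝ) < t := ht
    have ht0 : (0:ℝ) < t := lt_trans one_pos ht1
    set X := 2 * π * Real.sqrt t with hX
    have hst : (0:ℝ) < Real.sqrt t := Real.sqrt_pos.mpr ht0
    have hX0 : 0 < X := by positivity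
    have hexp4 : rexp (X / 4) ^ 4 = rexp X := by
      rw [← Real.exp_nat_mul]; congr 1; push_cast; ring
    have h14 : X / 4 ≤ rexp (X / 4) := by
      have := Real.add_one_le_exp (X / 4); linarith
    have hpow : (X / 4) ^ 4 ≤ rexp X := by
      rw [← hexp4]; exact pow_le_pow_left₀ (by positivity) h14 4
    have hXt : (X / 4) ^ 4 = (π ^ 4 / 16) * t ^ 2 := by
      rw [hX, show (2 * π * Real.sqrt t / 4) ^ 4 = (π ^ 4 / 16) * (Real.sqrt t ^ 2) ^ 2 by ring,
        Real.sq_sqrt ht0.le]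
    have key : rexp (-X) ≤ 16 / π ^ 4 * t ^ (-2 : ℝ) := by
      rw [Real.exp_neg, Real.rpow_neg ht0.le,
        show ((2:ℝ)) = ((2:ℕ):ℝ) by norm_num, Real.rpow_natCast]
      have hppos : (0:ℝ) < (π ^ 4 / 16) * t ^ 2 := by positivity
      have : (rexp X)⁻¹ ≤ ((π ^ 4 / 16) * t ^ 2)⁻¹ := by
        apply inv_anti₀ hppos; rw [← hXt]; exact hpow
      calc (rexp X)⁻¹ ≤ ((π ^ 4 / 16) * t ^ 2)⁻¹ := this
        _ = 16 / π ^ 4 * (t ^ 2)⁻¹ := by field_simp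
    calc ‖rexp (-X)‖ = rexp (-X) := by
          rw [Real.norm_eq_abs, abs_of_pos (Real.exp_pos _)]
      _ ≤ 16 / π ^ 4 * t ^ (-2 : ℝ) := key
  apply (h1.union h2).mono_set
  intro t ht
  rcases le_or_gt t 1 with h | h
  · exact Or.inl ⟨ht, h⟩
  · exact Or.inr h

lemma core_bound (x : ℝ × ℝ) (hx : 0 < x.2) (s : ℝ) (hs : 0 < s) :
    ∫⁻ y in upperHalf, ENNReal.ofReal ((max (halfPlaneGreen x y - s) 0) ^ 2) ≤
      ENNReal.ofReal (16 * x.2 ^ 2 *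
        ((∫ t in Set.Ioi (0:ℝ), rexp (-(2 * π * Real.sqrt t))) + 1) / (π ^ 2 * s ^ 2)) := by
  have hπ := Real.pi_pos
  set J := ∫ t in Set.Ioi (0:ℝ), rexp (-(2 * π * Real.sqrt t)) with hJ
  have hmf : AEMeasurable (fun y => (max (halfPlaneGreen x y - s) 0) ^ 2)
      (volume.restrict upperHalf) :=
    ((((measurable_green x).sub measurable_const).max measurable_const).pow
      measurable_const).aemeasurable
  rw [MeasureTheory.lintegral_eq_lintegral_meas_lt _ (ae_of_all _ fun y => by positivity) hmf]
  have hstep : ∀ t ∈ Set.Ioi (0:ℝ),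
      (volume.restrict upperHalf) {y : ℝ × ℝ | t < (max (halfPlaneGreen x y - s) 0) ^ 2} ≤
      ENNReal.ofReal (16 * x.2 ^ 2 / (π ^ 2 * s ^ 2) * rexp (-(2 * π * Real.sqrt t))) := by
    intro t ht
    have ht0 : (0:ℝ) < t := ht
    set σ := s + Real.sqrt t with hσdef
    have hst : 0 < Real.sqrt t := Real.sqrt_pos.mpr ht0
    have hσ : 0 < σ := by positivity
    have hsub : {y : ℝ × ℝ | t < (max (halfPlaneGreen x y - s) 0) ^ 2} ⊆
        {y : ℝ × ℝ | σ < halfPlaneGreen x y} := by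
      intro y hy
      simp only [Set.mem_setOf_eq] at hy ⊢
      by_contra hcon
      push_neg at hcon
      have h1 : max (halfPlaneGreen x y - s) 0 ≤ Real.sqrt t :=
        max_le (by rw [hσdef] at hcon; linarith) hst.le
      nlinarith [Real.sq_sqrt ht0.le, le_max_right (halfPlaneGreen x y - s) 0]
    calc (volume.restrict upperHalf) {y : ℝ × ℝ | t < (max (halfPlaneGreen x y - s) 0) ^ 2}
        = volume ({y : ℝ × ℝ | t < (max (halfPlaneGreen x y - s) 0) ^ 2} ∩ upperHalf) :=
          Measure.restrict_apply' measurableSet_upperHalf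
      _ ≤ volume ({y : ℝ × ℝ | σ < halfPlaneGreen x y} ∩ upperHalf) :=
          measure_mono (Set.inter_subset_inter_left _ hsub)
      _ ≤ ENNReal.ofReal (16 * x.2 ^ 2 * (1 + (rexp (4 * π * σ) - 1)) /
            (rexp (4 * π * σ) - 1) ^ 2) := level_volume x hx σ hσ
      _ ≤ ENNReal.ofReal (16 * x.2 ^ 2 / (π ^ 2 * s ^ 2) * rexp (-(2 * π * Real.sqrt t))) := by
          apply ENNReal.ofReal_le_ofReal
          set u := 2 * π * σ with hu
          have hu0 : 0 < u := by positivity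
          have h4 : 4 * π * σ = 2 * u := by rw [hu]; ring
          rw [h4]
          have haux := aux_exp hu0
          have e1 : rexp (-u) = rexp (-(2 * π * s)) * rexp (-(2 * π * Real.sqrt t)) := by
            rw [← Real.exp_add]; congr 1; rw [hu, hσdef]; ring
          have e2 : rexp (-(2 * π * s)) ≤ 1 := Real.exp_le_one_iff.mpr (by nlinarith)
          have e3 : 4 * π ^ 2 * s ^ 2 ≤ u ^ 2 := by
            rw [hu, hσdef]
            have h6 : s ^ 2 ≤ (s + Real.sqrt t) ^ 2 := by nlinarith [Real.sqrt_nonneg t]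
            nlinarith [mul_le_mul_of_nonneg_left h6 (show (0:ℝ) ≤ 4 * π ^ 2 by positivity)]
          have enum : 4 * rexp (-u) ≤ 4 * rexp (-(2 * π * Real.sqrt t)) := by
            rw [e1]; nlinarith [Real.exp_pos (-(2 * π * Real.sqrt t))]
          have h5 : 4 * rexp (-u) / u ^ 2 ≤
              4 * rexp (-(2 * π * Real.sqrt t)) / (4 * π ^ 2 * s ^ 2) :=
            div_le_div₀ (by positivity) enum (by positivity) e3
          calc 16 * x.2 ^ 2 * (1 + (rexp (2 * u) - 1)) / (rexp (2 * u) - 1) ^ 2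
              = 16 * x.2 ^ 2 * ((1 + (rexp (2 * u) - 1)) / (rexp (2 * u) - 1) ^ 2) := by ring
            _ ≤ 16 * x.2 ^ 2 * (4 * rexp (-u) / u ^ 2) :=
                mul_le_mul_of_nonneg_left haux (by positivity)
            _ ≤ 16 * x.2 ^ 2 * (4 * rexp (-(2 * π * Real.sqrt t)) / (4 * π ^ 2 * s ^ 2)) :=
                mul_le_mul_of_nonneg_left h5 (by positivity)
            _ = 16 * x.2 ^ 2 / (π ^ 2 * s ^ 2) * rexp (-(2 * π * Real.sqrt t)) := by ring
  calc ∫⁻ t in Set.Ioi (0:ℝ),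
        (volume.restrict upperHalf) {y : ℝ × ℝ | t < (max (halfPlaneGreen x y - s) 0) ^ 2}
      ≤ ∫⁻ t in Set.Ioi (0:ℝ),
          ENNReal.ofReal (16 * x.2 ^ 2 / (π ^ 2 * s ^ 2) * rexp (-(2 * π * Real.sqrt t))) := by
        apply lintegral_mono_ae
        rw [ae_restrict_iff' measurableSet_Ioi]
        exact ae_of_all _ hstep
    _ = ENNReal.ofReal (∫ t in Set.Ioi (0:ℝ),
          16 * x.2 ^ 2 / (π ^ 2 * s ^ 2) * rexp (-(2 * π * Real.sqrt t))) :=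
        (ofReal_integral_eq_lintegral_ofReal
          (integrable_exp_sqrt.const_mul _)
          (ae_of_all _ fun t => by positivity)).symm
    _ ≤ ENNReal.ofReal (16 * x.2 ^ 2 * (J + 1) / (π ^ 2 * s ^ 2)) := by
        apply ENNReal.ofReal_le_ofReal
        rw [integral_const_mul, ← hJ]
        have hM : (0:ℝ) ≤ 16 * x.2 ^ 2 / (π ^ 2 * s ^ 2) := by positivity
        calc 16 * x.2 ^ 2 / (π ^ 2 * s ^ 2) * J
            ≤ 16 * x.2 ^ 2 / (π ^ 2 * s ^ 2) * (J + 1) := by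
              apply mul_le_mul_of_nonneg_left (by linarith) hM
          _ = 16 * x.2 ^ 2 * (J + 1) / (π ^ 2 * s ^ 2) := by ring

lemma master (x : ℝ × ℝ) (hx : 0 < x.2) (ω : ℝ × ℝ → ℝ) (hnn : ∀ p, 0 ≤ ω p)
    (hInt : Integrable ω (volume.restrict upperHalf))
    (hL2 : MemLp ω 2 (volume.restrict upperHalf)) (s : ℝ) (hs : 0 < s) :
    (∫ y in upperHalf, halfPlaneGreen x y * ω y) ≤
      s * (∫ p in upperHalf, ω p) +
        Real.sqrt (16 * x.2 ^ 2 * ((∫ t in Set.Ioi (0:ℝ), rexp (-(2 * π * Real.sqrt t))) + 1) /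
          (π ^ 2 * s ^ 2)) * Real.sqrt (∫ p in upperHalf, (ω p) ^ 2) := by
  have hπ := Real.pi_pos
  set ν := volume.restrict upperHalf with hν
  set g := fun y => halfPlaneGreen x y with hg
  set J := ∫ t in Set.Ioi (0:ℝ), rexp (-(2 * π * Real.sqrt t)) with hJ
  set M2 := 16 * x.2 ^ 2 * (J + 1) / (π ^ 2 * s ^ 2) with hM2
  have hM2nn : 0 ≤ M2 := by
    have hJ0 : 0 ≤ J := setIntegral_nonneg measurableSet_Ioi (fun t _ => (Real.exp_pos _).le)
    rw [hM2]; positivity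
  have hgm : Measurable g := measurable_green x
  have hgnn : ∀ᵐ y ∂ν, 0 ≤ g y := by
    rw [hν]
    filter_upwards [ae_restrict_mem measurableSet_upperHalf] with y hy
    exact green_nonneg hx (le_of_lt hy)
  have hωm : AEStronglyMeasurable ω ν := hInt.1
  have hA0 : 0 ≤ ∫ p in upperHalf, ω p := integral_nonneg fun p => hnn p
  have hQ0 : 0 ≤ ∫ p in upperHalf, (ω p) ^ 2 := integral_nonneg fun p => sq_nonneg _
  set W := fun y => ENNReal.ofReal (ω y) with hW
  set F1 := fun y => ENNReal.ofReal (min (g y) s) with hF1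
  set F2 := fun y => ENNReal.ofReal (max (g y - s) 0) with hF2
  have hWm : AEMeasurable W ν := ENNReal.measurable_ofReal.comp_aemeasurable hInt.aemeasurable
  have hF1m : Measurable F1 := (hgm.min measurable_const).ennreal_ofReal
  have hF2m : Measurable F2 := ((hgm.sub measurable_const).max measurable_const).ennreal_ofReal
  have hprod_nn : 0 ≤ᵐ[ν] fun y => g y * ω y := by
    filter_upwards [hgnn] with y h
    exact mul_nonneg h (hnn y)
  have key : ∫⁻ y, ENNReal.ofReal (g y * ω y) ∂ν ≤ ENNReal.ofReal
      (s * (∫ p in upperHalf, ω p) + Real.sqrt M2 * Real.sqrt (∫ p in upperHalf, (ω p) ^ 2)) := by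
    have step0 : ∫⁻ y, ENNReal.ofReal (g y * ω y) ∂ν = ∫⁻ y, ENNReal.ofReal (g y) * W y ∂ν := by
      apply lintegral_congr_ae
      filter_upwards [hgnn] with y h
      rw [hW, ENNReal.ofReal_mul h]
    have split : ∀ y, ENNReal.ofReal (g y) ≤ F1 y + F2 y := by
      intro y
      have hid : g y = min (g y) s + max (g y - s) 0 := by
        rcases le_total (g y) s with h | h
        · rw [min_eq_left h, max_eq_right (by linarith)]; ring
        · rw [min_eq_right h, max_eq_left (by linarith)]; ring
      rw [hF1, hF2, hid]
      exact ENNReal.ofReal_add_le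
    have hterm1 : ∫⁻ y, F1 y * W y ∂ν ≤ ENNReal.ofReal (s * ∫ p in upperHalf, ω p) := by
      have h1 : ∫⁻ y, F1 y * W y ∂ν ≤ ∫⁻ y, ENNReal.ofReal s * W y ∂ν := by
        apply lintegral_mono
        intro y
        exact mul_le_mul_left (ENNReal.ofReal_le_ofReal (min_le_right _ _)) _
      have h2 : ∫⁻ y, ENNReal.ofReal s * W y ∂ν = ENNReal.ofReal s * ∫⁻ y, W y ∂ν :=
        lintegral_const_mul' _ _ ENNReal.ofReal_ne_top
      have h3 : ∫⁻ y, W y ∂ν = ENNReal.ofReal (∫ p in upperHalf, ω p) :=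
        (ofReal_integral_eq_lintegral_ofReal hInt (ae_of_all _ hnn)).symm
      rw [h2, h3, ← ENNReal.ofReal_mul hs.le] at h1
      exact h1
    have hterm2 : ∫⁻ y, F2 y * W y ∂ν ≤
        ENNReal.ofReal (Real.sqrt M2 * Real.sqrt (∫ p in upperHalf, (ω p) ^ 2)) := by
      have hconj : Real.HolderConjugate 2 2 := ⟨by norm_num, by norm_num, by norm_num⟩
      have hholder := ENNReal.lintegral_mul_le_Lp_mul_Lq ν hconj hF2m.aemeasurable hWm
      have hF2sq : ∀ y, F2 y ^ (2:ℝ) = ENNReal.ofReal ((max (g y - s) 0) ^ 2) := by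
        intro y
        rw [hF2, show (2:ℝ) = ((2:ℕ):ℝ) by norm_num, ENNReal.rpow_natCast,
          ← ENNReal.ofReal_pow (le_max_right _ _)]
      have hWsq : ∀ y, W y ^ (2:ℝ) = ENNReal.ofReal ((ω y) ^ 2) := by
        intro y
        rw [hW, show (2:ℝ) = ((2:ℕ):ℝ) by norm_num, ENNReal.rpow_natCast,
          ← ENNReal.ofReal_pow (hnn y)]
      have hInt2 : ∫⁻ y, F2 y ^ (2:ℝ) ∂ν ≤ ENNReal.ofReal M2 := by
        calc ∫⁻ y, F2 y ^ (2:ℝ) ∂ν = ∫⁻ y, ENNReal.ofReal ((max (g y - s) 0) ^ 2) ∂ν := by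
              exact lintegral_congr fun y => hF2sq y
          _ ≤ ENNReal.ofReal M2 := core_bound x hx s hs
      have hIntW : ∫⁻ y, W y ^ (2:ℝ) ∂ν = ENNReal.ofReal (∫ p in upperHalf, (ω p) ^ 2) := by
        calc ∫⁻ y, W y ^ (2:ℝ) ∂ν = ∫⁻ y, ENNReal.ofReal ((ω y) ^ 2) ∂ν :=
              lintegral_congr fun y => hWsq y
          _ = ENNReal.ofReal (∫ p in upperHalf, (ω p) ^ 2) :=
              (ofReal_integral_eq_lintegral_ofReal hL2.integrable_sq
                (ae_of_all _ fun p => sq_nonneg _)).symm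
      calc ∫⁻ y, F2 y * W y ∂ν = ∫⁻ y, (F2 * W) y ∂ν := rfl
        _ ≤ (∫⁻ y, F2 y ^ (2:ℝ) ∂ν) ^ ((1:ℝ)/2) * (∫⁻ y, W y ^ (2:ℝ) ∂ν) ^ ((1:ℝ)/2) := hholder
        _ ≤ (ENNReal.ofReal M2) ^ ((1:ℝ)/2) * (ENNReal.ofReal (∫ p in upperHalf, (ω p) ^ 2)) ^ ((1:ℝ)/2) := by
            apply mul_le_mul'
            · exact ENNReal.rpow_le_rpow hInt2 (by norm_num)
            · rw [hIntW]
        _ = ENNReal.ofReal (Real.sqrt M2 * Real.sqrt (∫ p in upperHalf, (ω p) ^ 2)) := by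
            rw [ENNReal.ofReal_rpow_of_nonneg hM2nn (by norm_num : (0:ℝ) ≤ 1/2),
              ENNReal.ofReal_rpow_of_nonneg hQ0 (by norm_num : (0:ℝ) ≤ 1/2),
              ← ENNReal.ofReal_mul (by positivity),
              Real.sqrt_eq_rpow, Real.sqrt_eq_rpow]
    calc ∫⁻ y, ENNReal.ofReal (g y * ω y) ∂ν = ∫⁻ y, ENNReal.ofReal (g y) * W y ∂ν := step0
      _ ≤ ∫⁻ y, (F1 y + F2 y) * W y ∂ν :=
          lintegral_mono fun y => mul_le_mul_left (split y) _
      _ = ∫⁻ y, (F1 y * W y + F2 y * W y) ∂ν := by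
          apply lintegral_congr; intro y; ring
      _ = (∫⁻ y, F1 y * W y ∂ν) + ∫⁻ y, F2 y * W y ∂ν :=
          lintegral_add_left' (hF1m.aemeasurable.mul hWm) _
      _ ≤ ENNReal.ofReal (s * ∫ p in upperHalf, ω p) +
          ENNReal.ofReal (Real.sqrt M2 * Real.sqrt (∫ p in upperHalf, (ω p) ^ 2)) :=
          add_le_add hterm1 hterm2
      _ = ENNReal.ofReal (s * (∫ p in upperHalf, ω p) +
          Real.sqrt M2 * Real.sqrt (∫ p in upperHalf, (ω p) ^ 2)) :=
          (ENNReal.ofReal_add (by positivity) (by positivity)).symm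
  have hrepr : (∫ y in upperHalf, halfPlaneGreen x y * ω y) =
      (∫⁻ y, ENNReal.ofReal (g y * ω y) ∂ν).toReal := by
    rw [hν]
    exact integral_eq_lintegral_of_nonneg_ae hprod_nn (hgm.aestronglyMeasurable.mul hωm)
  rw [hrepr]
  exact ENNReal.toReal_le_of_le_ofReal (by positivity) key

theorem stream_function_bound :
    ∃ C > 0, ∀ ω : ℝ × ℝ → ℝ,
      (∀ p, 0 ≤ ω p) →
      Integrable ω (volume.restrict upperHalf) →
      MemLp ω 2 (volume.restrict upperHalf) →
      Integrable (fun p => p.2 * ω p) (volume.restrict upperHalf) →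
      ∀ x ∈ upperHalf,
        (∫ y in upperHalf, halfPlaneGreen x y * ω y) ≤
          C * Real.sqrt x.2 * (∫ p in upperHalf, ω p) ^ ((1 : ℝ) / 2) *
            (∫ p in upperHalf, (ω p) ^ 2) ^ ((1 : ℝ) / 4) := by
  have hπ := Real.pi_pos
  set J := ∫ t in Set.Ioi (0:ℝ), rexp (-(2 * π * Real.sqrt t)) with hJ
  have hJ0 : 0 ≤ J := setIntegral_nonneg measurableSet_Ioi fun t _ => (Real.exp_pos _).le
  set D := Real.sqrt (16 * (J + 1) / π ^ 2) with hD
  have hD0 : 0 < D := Real.sqrt_pos.mpr (by positivity)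
  refine ⟨2 * Real.sqrt D, by positivity, ?_⟩
  intro ω hnn hInt hL2 _ x hx
  have hx2 : 0 < x.2 := hx
  set A := ∫ p in upperHalf, ω p with hA
  set Q := ∫ p in upperHalf, (ω p) ^ 2 with hQ
  have hA0 : 0 ≤ A := integral_nonneg fun p => hnn p
  have hQ0 : 0 ≤ Q := integral_nonneg fun p => sq_nonneg _
  by_cases hz : ω =ᵐ[volume.restrict upperHalf] 0
  · have hfg : (fun y => halfPlaneGreen x y * ω y) =ᵐ[volume.restrict upperHalf]
        (fun _ => (0:ℝ)) := by
      filter_upwards [hz] with y h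
      simp [h]
    have hL : (∫ y in upperHalf, halfPlaneGreen x y * ω y) = 0 := by
      rw [integral_congr_ae hfg, integral_zero]
    rw [hL]
    positivity
  · have hAp : 0 < A := by
      rcases hA0.lt_or_eq with h | h
      · exact h
      · exact absurd ((integral_eq_zero_iff_of_nonneg hnn hInt).mp h.symm) hz
    have hQp : 0 < Q := by
      rcases hQ0.lt_or_eq with h | h
      · exact h
      · exfalso
        have hsq0 : (fun p => (ω p) ^ 2) =ᵐ[volume.restrict upperHalf] 0 :=
          (integral_eq_zero_iff_of_nonneg (fun p => sq_nonneg _) hL2.integrable_sq).mp h.symm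
        apply hz
        filter_upwards [hsq0] with y hy
        have : (ω y) ^ 2 = 0 := hy
        have := pow_eq_zero_iff (n := 2) (by norm_num) |>.mp this
        simpa using this
    set B := Real.sqrt Q with hB
    have hBp : 0 < B := Real.sqrt_pos.mpr hQp
    set s := Real.sqrt (D * x.2 * B / A) with hs
    have hsp : 0 < s := Real.sqrt_pos.mpr (by positivity)
    have hmaster := master x hx2 ω hnn hInt hL2 s hsp
    rw [← hJ, ← hA, ← hQ, ← hB] at hmaster
    have hrewrite : Real.sqrt (16 * x.2 ^ 2 * (J + 1) / (π ^ 2 * s ^ 2)) = D * x.2 / s := by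
      rw [show 16 * x.2 ^ 2 * (J + 1) / (π ^ 2 * s ^ 2)
          = (16 * (J + 1) / π ^ 2) * (x.2 / s) ^ 2 by field_simp]
      rw [Real.sqrt_mul (by positivity), Real.sqrt_sq (by positivity), hD]; ring
    rw [hrewrite] at hmaster
    have hssq : s ^ 2 = D * x.2 * B / A := Real.sq_sqrt (by positivity)
    have hval : s * A + D * x.2 / s * B = 2 * (s * A) := by
      have h2 : D * x.2 * B = s ^ 2 * A := by
        rw [hssq]; field_simp
      have h3 : D * x.2 / s * B = s * A := by
        rw [show D * x.2 / s * B = D * x.2 * B / s by ring, h2]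
        field_simp
      rw [h3]; ring
    rw [hval] at hmaster
    have hfinal : 2 * (s * A) = 2 * Real.sqrt D * Real.sqrt x.2 * A ^ ((1:ℝ)/2) * Q ^ ((1:ℝ)/4) := by
      have hsA : s * A = Real.sqrt (D * x.2 * B * A) := by
        rw [show D * x.2 * B * A = (D * x.2 * B / A) * A ^ 2 by field_simp,
          Real.sqrt_mul (by positivity), ← hssq, Real.sqrt_sq hA0,
          Real.sqrt_sq_eq_abs, abs_of_pos hsp]
      rw [hsA, Real.sqrt_mul (by positivity : (0:ℝ) ≤ D * x.2 * B),
        Real.sqrt_mul (by positivity : (0:ℝ) ≤ D * x.2), Real.sqrt_mul hD0.le]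
      have e1 : Real.sqrt B = Q ^ ((1:ℝ)/4) := by
        rw [hB, Real.sqrt_eq_rpow, Real.sqrt_eq_rpow, ← Real.rpow_mul hQ0]
        norm_num
      have e2 : Real.sqrt A = A ^ ((1:ℝ)/2) := Real.sqrt_eq_rpow A
      rw [e1, e2]; ring
    rw [hfinal] at hmaster
    exact hmaster
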